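/- Let p > 1, ζ > 3(1 − 1/p) and T > 0. For every η > 0 there exists a constant C_η > 0 such that for all functions H, F, G : [0,T] × ℤ³ → [0,∞) that are measurable in the time variable for each k ∈ ℤ³, one has ∑_{k∈ℤ³} ⟨k⟩^{ζ p} ( ∫_0^T H(τ,k) ( ∑_{l∈ℤ³} F(τ,k−l) G(τ,l) ) dτ )^{p/2} ≤ η ∑_{k∈ℤ³} ⟨k⟩^{ζ p} ( ∫_0^T H(τ,k)² dτ )^{p/2} + C_η · A_F^p · B_G^p. -/

import Mathlib

open scoped ENNReal
open MeasureTheory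

/-- The Japanese bracket `⟨k⟩ = (1 + |k|²)^{1/2}` of a lattice point `k ∈ ℤ³`,
where `|k|` is the Euclidean norm. -/
noncomputable def jap (k : Fin 3 → ℤ) : ℝ := Real.sqrt (1 + ∑ i, ((k i : ℝ)) ^ 2)

/-- The Japanese bracket, viewed in `[0,∞]`. -/
noncomputable def japE (k : Fin 3 → ℤ) : ℝ≥0∞ := ENNReal.ofReal (jap k)

/-- `A_F = (∑_{k∈ℤ³} ⟨k⟩^{ζp} (sup_{τ∈[0,T]} F(τ,k))^p)^{1/p}`, possibly `+∞`. -/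
noncomputable def Anorm (ζ p T : ℝ) (F : ℝ → (Fin 3 → ℤ) → ℝ) : ℝ≥0∞ :=
  (∑' k, japE k ^ (ζ * p) *
    (⨆ τ ∈ Set.Icc (0 : ℝ) T, ENNReal.ofReal (F τ k)) ^ p) ^ (1 / p)

/-- `B_F = (∑_{k∈ℤ³} ⟨k⟩^{ζp} (∫_0^T F(τ,k)² dτ)^{p/2})^{1/p}`, possibly `+∞`. -/
noncomputable def Bnorm (ζ p T : ℝ) (F : ℝ → (Fin 3 → ℤ) → ℝ) : ℝ≥0∞ :=
  (∑' k, japE k ^ (ζ * p) *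
    (∫⁻ τ in Set.Icc (0 : ℝ) T, ENNReal.ofReal (F τ k) ^ 2) ^ (p / 2)) ^ (1 / p)

namespace Aux6

abbrev Z3 := Fin 3 → ℤ

lemma jap_pos (k : Z3) : 0 < jap k := Real.sqrt_pos.mpr (by positivity)

lemma jap_sq (k : Z3) : jap k ^ 2 = 1 + ∑ i, ((k i : ℝ)) ^ 2 := Real.sq_sqrt (by positivity)

lemma one_le_jap (k : Z3) : 1 ≤ jap k := by
  rw [show (1:ℝ) = Real.sqrt 1 by simp [Real.sqrt_one]]
  exact Real.sqrt_le_sqrt (le_add_of_nonneg_right (by positivity))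

lemma jap_triangle (a b : Z3) : jap (a + b) ≤ jap a + jap b := by
  have ha := jap_sq a
  have hb := jap_sq b
  have hCS : (∑ i, (a i:ℝ) * (b i:ℝ))^2 ≤ (∑ i, (a i:ℝ)^2) * (∑ i, (b i:ℝ)^2) :=
    Finset.sum_mul_sq_le_sq_mul_sq _ _ _
  have hab : ∑ i, (a i:ℝ) * (b i:ℝ) ≤ jap a * jap b := by
    rcases le_total (∑ i, (a i:ℝ) * (b i:ℝ)) 0 with h | h
    · have := mul_pos (jap_pos a) (jap_pos b); linarith
    · have h1 : (∑ i, (a i:ℝ) * (b i:ℝ))^2 ≤ (jap a * jap b)^2 := by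
        calc (∑ i, (a i:ℝ) * (b i:ℝ))^2 ≤ (∑ i, (a i:ℝ)^2) * (∑ i, (b i:ℝ)^2) := hCS
          _ ≤ (1 + ∑ i, (a i:ℝ)^2) * (1 + ∑ i, (b i:ℝ)^2) := by
              have s1 : (0:ℝ) ≤ ∑ i, (a i:ℝ)^2 := by positivity
              have s2 : (0:ℝ) ≤ ∑ i, (b i:ℝ)^2 := by positivity
              nlinarith
          _ = (jap a * jap b)^2 := by rw [mul_pow, ha, hb]
      have h2 : 0 < jap a * jap b := mul_pos (jap_pos a) (jap_pos b)
      nlinarith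
  have hexp : (∑ i, ((a+b) i : ℝ)^2)
      = (∑ i, (a i:ℝ)^2) + 2 * (∑ i, (a i:ℝ) * (b i:ℝ)) + ∑ i, (b i:ℝ)^2 := by
    have : ∀ i : Fin 3, ((a+b) i : ℝ)^2 = (a i:ℝ)^2 + 2*((a i:ℝ)*(b i:ℝ)) + (b i:ℝ)^2 := by
      intro i; simp only [Pi.add_apply]; push_cast; ring
    rw [Finset.sum_congr rfl (fun i _ => this i)]
    rw [Finset.sum_add_distrib, Finset.sum_add_distrib, ← Finset.mul_sum]
  have hgoal : 1 + ∑ i, ((a+b) i : ℝ)^2 ≤ (jap a + jap b)^2 := by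
    rw [hexp]; nlinarith [jap_pos a, jap_pos b]
  calc jap (a+b) ≤ Real.sqrt ((jap a + jap b)^2) := Real.sqrt_le_sqrt hgoal
    _ = jap a + jap b := Real.sqrt_sq (add_nonneg (jap_pos a).le (jap_pos b).le)

lemma japE_rpow (k : Z3) (e : ℝ) : japE k ^ e = ENNReal.ofReal (jap k ^ e) :=
  ENNReal.ofReal_rpow_of_pos (jap_pos k)

lemma japE_rpow_ne_top (k : Z3) (e : ℝ) : japE k ^ e ≠ ⊤ := by
  rw [japE_rpow]; exact ENNReal.ofReal_ne_top

lemma japE_rpow_ne_zero (k : Z3) (e : ℝ) : japE k ^ e ≠ 0 := by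
  rw [japE_rpow]
  simp only [ne_eq, ENNReal.ofReal_eq_zero, not_le]
  exact Real.rpow_pos_of_pos (jap_pos k) e

lemma jap_peetre {ζ : ℝ} (hζ : 0 ≤ ζ) (k l : Z3) :
    jap k ^ ζ ≤ 2 ^ ζ * (jap (k - l) ^ ζ + jap l ^ ζ) := by
  have h1 : jap k ≤ jap (k - l) + jap l := by
    have := jap_triangle (k - l) l
    rwa [sub_add_cancel] at this
  have h2 : jap k ≤ 2 * max (jap (k-l)) (jap l) := by
    refine h1.trans ?_
    rw [two_mul]
    exact add_le_add (le_max_left _ _) (le_max_right _ _)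
  calc jap k ^ ζ ≤ (2 * max (jap (k-l)) (jap l)) ^ ζ :=
        Real.rpow_le_rpow (jap_pos k).le h2 hζ
    _ = 2 ^ ζ * (max (jap (k-l)) (jap l)) ^ ζ := by
        rw [Real.mul_rpow (by norm_num) (le_max_of_le_left (jap_pos _).le)]
    _ ≤ 2 ^ ζ * (jap (k - l) ^ ζ + jap l ^ ζ) := by
        have : (max (jap (k-l)) (jap l)) ^ ζ ≤ jap (k - l) ^ ζ + jap l ^ ζ := by
          rcases max_cases (jap (k-l)) (jap l) with ⟨h, _⟩ | ⟨h, _⟩ <;> rw [h]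
          · exact le_add_of_nonneg_right (Real.rpow_nonneg (jap_pos _).le _)
          · exact le_add_of_nonneg_left (Real.rpow_nonneg (jap_pos _).le _)
        exact mul_le_mul_of_nonneg_left this (by positivity)

lemma japE_peetre {ζ : ℝ} (hζ : 0 ≤ ζ) (k l : Z3) :
    japE k ^ ζ ≤ ENNReal.ofReal (2 ^ ζ) * (japE (k - l) ^ ζ + japE l ^ ζ) := by
  rw [japE_rpow, japE_rpow, japE_rpow,
    ← ENNReal.ofReal_add (Real.rpow_nonneg (jap_pos _).le _) (Real.rpow_nonneg (jap_pos _).le _),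
    ← ENNReal.ofReal_mul (by positivity)]
  exact ENNReal.ofReal_le_ofReal (jap_peetre hζ k l)

lemma tsum_holder {p q : ℝ} (hpq : p.HolderConjugate q) (f g : Z3 → ℝ≥0∞) :
    ∑' k, f k * g k ≤ (∑' k, f k ^ p) ^ (1/p) * (∑' k, g k ^ q) ^ (1/q) := by
  have h := ENNReal.lintegral_mul_le_Lp_mul_Lq (Measure.count : Measure Z3) hpq
    (measurable_of_countable f).aemeasurable (measurable_of_countable g).aemeasurable
  simpa [MeasureTheory.lintegral_count, Pi.mul_apply] using h

lemma young_conv {p q : ℝ} (hpq : p.HolderConjugate q) (u w : Z3 → ℝ≥0∞) :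
    ∑' k, (∑' l, u (k - l) * w l) ^ p ≤ (∑' k, u k ^ p) * (∑' k, w k) ^ p := by
  have hp0 : (0:ℝ) < p := hpq.pos
  have hq0 : (0:ℝ) < q := hpq.symm.pos
  have key : ∀ k : Z3, (∑' l, u (k - l) * w l) ^ p
      ≤ (∑' l, u (k - l) ^ p * w l) * (∑' l, w l) ^ (p/q) := by
    intro k
    have h1 : ∑' l, u (k - l) * w l
        ≤ (∑' l, (u (k-l) * w l ^ (1/p)) ^ p) ^ (1/p) * (∑' l, (w l ^ (1/q)) ^ q) ^ (1/q) := by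
      refine le_trans (le_of_eq (tsum_congr fun l => ?_)) (tsum_holder hpq _ _)
      rw [mul_assoc, ← ENNReal.rpow_add_of_nonneg _ _ (by positivity) (by positivity)]
      rw [show 1/p + 1/q = 1 by rw [one_div, one_div]; exact hpq.inv_add_inv_eq_one, ENNReal.rpow_one]
    have e1 : ∀ l : Z3, (u (k-l) * w l ^ (1/p)) ^ p = u (k-l) ^ p * w l := by
      intro l
      rw [ENNReal.mul_rpow_of_nonneg _ _ hp0.le, ← ENNReal.rpow_mul,
        one_div, inv_mul_cancel₀ hp0.ne', ENNReal.rpow_one]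
    have e2 : ∀ l : Z3, (w l ^ (1/q)) ^ q = w l := by
      intro l
      rw [← ENNReal.rpow_mul, one_div, inv_mul_cancel₀ hq0.ne', ENNReal.rpow_one]
    simp only [e1, e2] at h1
    calc (∑' l, u (k - l) * w l) ^ p
        ≤ ((∑' l, u (k-l) ^ p * w l) ^ (1/p) * (∑' l, w l) ^ (1/q)) ^ p :=
          ENNReal.rpow_le_rpow h1 hp0.le
      _ = (∑' l, u (k - l) ^ p * w l) * (∑' l, w l) ^ (p/q) := by
          rw [ENNReal.mul_rpow_of_nonneg _ _ hp0.le, ← ENNReal.rpow_mul, ← ENNReal.rpow_mul,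
            one_div_mul_eq_div, div_self hp0.ne', ENNReal.rpow_one,
            one_div_mul_eq_div]
  calc ∑' k, (∑' l, u (k - l) * w l) ^ p
      ≤ ∑' k, (∑' l, u (k - l) ^ p * w l) * (∑' l, w l) ^ (p/q) :=
        ENNReal.tsum_le_tsum key
    _ = (∑' (k : Z3), ∑' l, u (k - l) ^ p * w l) * (∑' l, w l) ^ (p/q) :=
        ENNReal.tsum_mul_right
    _ = ((∑' (l : Z3), ∑' (k : Z3), u (k - l) ^ p * w l)) * (∑' l, w l) ^ (p/q) := by
        rw [ENNReal.tsum_comm]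
    _ = ((∑' (l : Z3), (∑' (k : Z3), u (k - l) ^ p) * w l)) * (∑' l, w l) ^ (p/q) := by
        congr 1; exact tsum_congr fun l => ENNReal.tsum_mul_right
    _ = ((∑' (l : Z3), (∑' (k : Z3), u k ^ p) * w l)) * (∑' l, w l) ^ (p/q) := by
        congr 1; refine tsum_congr fun l => ?_
        congr 1
        exact (Equiv.subRight l).tsum_eq (fun m => u m ^ p)
    _ = (∑' k, u k ^ p) * ((∑' l, w l) * (∑' l, w l) ^ (p/q)) := by
        rw [ENNReal.tsum_mul_left, mul_assoc]
    _ = (∑' k, u k ^ p) * (∑' k, w k) ^ p := by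
        congr 1
        have hpq1 : (1:ℝ) + p/q = p := by
          have := hpq.div_conj_eq_sub_one; linarith
        calc (∑' l, w l) * (∑' l, w l) ^ (p/q)
            = (∑' l, w l) ^ (1:ℝ) * (∑' l, w l) ^ (p/q) := by rw [ENNReal.rpow_one]
          _ = (∑' l, w l) ^ ((1:ℝ) + p/q) :=
              (ENNReal.rpow_add_of_nonneg _ _ zero_le_one (by positivity)).symm
          _ = (∑' (k : Z3), w k) ^ p := by rw [hpq1]

lemma erpow_two (x : ℝ≥0∞) : x ^ (2:ℝ) = x ^ (2:ℕ) := by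
  rw [← ENNReal.rpow_natCast]; norm_num

lemma mul_le_sq_add_sq (a b : ℝ≥0∞) : a * b ≤ a^2 + b^2 := by
  calc a * b ≤ max a b * max a b := mul_le_mul' (le_max_left _ _) (le_max_right _ _)
    _ ≤ a^2 + b^2 := by
      rcases max_cases a b with ⟨h, _⟩ | ⟨h, _⟩ <;> rw [h, ← pow_two]
      · exact le_add_of_nonneg_right zero_le
      · exact le_add_of_nonneg_left zero_le

lemma eta_split {η : ℝ} (hη : 0 < η) (a b : ℝ≥0∞) :
    a * b ≤ ENNReal.ofReal η * a^2 + (ENNReal.ofReal η)⁻¹ * b^2 := by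
  set c := ENNReal.ofReal η with hc
  have hc0 : c ≠ 0 := by simp [hc, ENNReal.ofReal_eq_zero]; linarith
  have hct : c ≠ ⊤ := ENNReal.ofReal_ne_top
  set x := c ^ (1/2:ℝ) with hx
  have hx0 : x ≠ 0 := by
    simp only [hx, ne_eq, ENNReal.rpow_eq_zero_iff, not_or, not_and, not_lt]
    constructor <;> intro h <;> [exact absurd h hc0; exact absurd h hct]
  have hxt : x ≠ ⊤ := by
    simp only [hx, ne_eq, ENNReal.rpow_eq_top_iff, not_or, not_and, not_lt]
    constructor <;> intro h <;> [exact absurd h hc0; exact absurd h hct]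
  have hxsq : x ^ 2 = c := by
    rw [← erpow_two, hx, ← ENNReal.rpow_mul]; norm_num
  have hab : a * b = (x * a) * (x⁻¹ * b) := by
    rw [mul_mul_mul_comm, ENNReal.mul_inv_cancel hx0 hxt, one_mul]
  calc a * b = (x * a) * (x⁻¹ * b) := hab
    _ ≤ (x * a)^2 + (x⁻¹ * b)^2 := mul_le_sq_add_sq _ _
    _ = c * a^2 + c⁻¹ * b^2 := by
        rw [mul_pow, mul_pow, hxsq, ← ENNReal.inv_pow, hxsq]

lemma add_rpow_le (x y : ℝ≥0∞) {p : ℝ} (hp : 0 ≤ p) :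
    (x + y) ^ p ≤ (2:ℝ≥0∞) ^ p * (x ^ p + y ^ p) := by
  calc (x + y) ^ p ≤ ((2:ℝ≥0∞) * max x y) ^ p := by
        refine ENNReal.rpow_le_rpow ?_ hp
        rw [two_mul]
        exact add_le_add (le_max_left _ _) (le_max_right _ _)
    _ = (2:ℝ≥0∞) ^ p * (max x y) ^ p := ENNReal.mul_rpow_of_nonneg _ _ hp
    _ ≤ (2:ℝ≥0∞) ^ p * (x ^ p + y ^ p) := by
        refine mul_le_mul_right ?_ _
        rcases max_cases x y with ⟨h, _⟩ | ⟨h, _⟩ <;> rw [h]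
        · exact le_add_of_nonneg_right zero_le
        · exact le_add_of_nonneg_left zero_le

lemma iSup_sq {ι : Type*} (u : ι → ℝ≥0∞) (hd : Directed (· ≤ ·) u) :
    (⨆ i, u i) ^ 2 = ⨆ i, (u i) ^ 2 := by
  apply le_antisymm
  · rw [pow_two, ENNReal.iSup_mul]
    refine iSup_le fun i => ?_
    rw [ENNReal.mul_iSup]
    refine iSup_le fun j => ?_
    obtain ⟨m, him, hjm⟩ := hd i j
    calc u i * u j ≤ u m * u m := mul_le_mul' him hjm
      _ = u m ^ 2 := (pow_two _).symm
      _ ≤ ⨆ i, (u i) ^ 2 := le_iSup (fun i => (u i)^2) m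
  · exact iSup_le fun i => pow_le_pow_left' (le_iSup u i) 2

lemma finset_mink {α : Type*} [MeasurableSpace α] (μ : Measure α) (s : Finset Z3)
    (u : Z3 → α → ℝ≥0∞) (hm : ∀ l, Measurable (u l)) :
    (∫⁻ τ, (∑ l ∈ s, u l τ) ^ (2:ℝ) ∂μ) ^ (1/2:ℝ)
      ≤ ∑ l ∈ s, (∫⁻ τ, (u l τ) ^ (2:ℝ) ∂μ) ^ (1/2:ℝ) := by
  induction s using Finset.cons_induction with
  | empty =>
      simp [ENNReal.zero_rpow_of_pos, lintegral_zero]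
  | cons a s ha ih =>
      simp only [Finset.sum_cons]
      calc (∫⁻ τ, (u a τ + ∑ l ∈ s, u l τ) ^ (2:ℝ) ∂μ) ^ (1/2:ℝ)
          ≤ (∫⁻ τ, (u a τ) ^ (2:ℝ) ∂μ) ^ (1/2:ℝ)
            + (∫⁻ τ, (∑ l ∈ s, u l τ) ^ (2:ℝ) ∂μ) ^ (1/2:ℝ) :=
            ENNReal.lintegral_Lp_add_le (hm a).aemeasurable
              (Finset.measurable_sum s fun l _ => hm l).aemeasurable one_le_two
        _ ≤ _ := add_le_add_right ih _

lemma mink {α : Type*} [MeasurableSpace α] (μ : Measure α) (c : Z3 → ℝ≥0∞)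
    (h : Z3 → α → ℝ≥0∞) (hm : ∀ l, Measurable (h l)) :
    (∫⁻ τ, (∑' l, c l * h l τ) ^ 2 ∂μ)
      ≤ (∑' l, c l * (∫⁻ τ, (h l τ) ^ 2 ∂μ) ^ (1/2:ℝ)) ^ 2 := by
  set R := ∑' l, c l * (∫⁻ τ, (h l τ) ^ 2 ∂μ) ^ (1/2:ℝ) with hR
  have hpt : ∀ τ, (∑' l, c l * h l τ) ^ 2
      = ⨆ s : Finset Z3, (∑ l ∈ s, c l * h l τ) ^ 2 := by
    intro τ
    rw [ENNReal.tsum_eq_iSup_sum]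
    exact iSup_sq _ ((Finset.sum_mono_set _).directed_le)
  rw [lintegral_congr hpt]
  rw [lintegral_iSup_directed]
  · refine iSup_le fun s => ?_
    have h1 : (∫⁻ τ, (∑ l ∈ s, c l * h l τ) ^ (2:ℝ) ∂μ) ^ (1/2:ℝ) ≤ R := by
      refine le_trans (finset_mink μ s (fun l τ => c l * h l τ)
        (fun l => ((hm l).const_mul _))) ?_
      refine le_trans (le_of_eq (Finset.sum_congr rfl (fun l _ => ?_))) (ENNReal.sum_le_tsum s)
      have e1 : (∫⁻ τ, (h l τ) ^ (2:ℝ) ∂μ) = ∫⁻ τ, (h l τ) ^ 2 ∂μ :=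
        lintegral_congr fun τ => erpow_two _
      calc (∫⁻ τ, (c l * h l τ) ^ (2:ℝ) ∂μ) ^ (1/2:ℝ)
          = (c l ^ (2:ℝ) * ∫⁻ τ, (h l τ) ^ (2:ℝ) ∂μ) ^ (1/2:ℝ) := by
            rw [← lintegral_const_mul _ ((hm l).pow_const (2:ℝ))]
            exact congrArg (· ^ (1/2:ℝ)) (lintegral_congr fun τ => by
              rw [ENNReal.mul_rpow_of_nonneg _ _ (by norm_num : (0:ℝ) ≤ 2)])
        _ = (c l ^ (2:ℝ)) ^ (1/2:ℝ) * (∫⁻ τ, (h l τ) ^ (2:ℝ) ∂μ) ^ (1/2:ℝ) :=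
            ENNReal.mul_rpow_of_nonneg _ _ (by norm_num)
        _ = c l * (∫⁻ τ, (h l τ) ^ 2 ∂μ) ^ (1/2:ℝ) := by
            rw [← ENNReal.rpow_mul, e1, show (2:ℝ) * (1/2) = 1 by norm_num, ENNReal.rpow_one]
    have e2 : ∫⁻ τ, (∑ l ∈ s, c l * h l τ) ^ 2 ∂μ
        = ∫⁻ τ, (∑ l ∈ s, c l * h l τ) ^ (2:ℝ) ∂μ :=
      lintegral_congr fun τ => (erpow_two _).symm
    calc ∫⁻ τ, (∑ l ∈ s, c l * h l τ) ^ 2 ∂μ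
        = ((∫⁻ τ, (∑ l ∈ s, c l * h l τ) ^ (2:ℝ) ∂μ) ^ (1/2:ℝ)) ^ (2:ℝ) := by
          rw [e2, ← ENNReal.rpow_mul, show (1/2:ℝ) * 2 = 1 by norm_num, ENNReal.rpow_one]
      _ ≤ R ^ (2:ℝ) := ENNReal.rpow_le_rpow h1 (by norm_num)
      _ = R ^ 2 := erpow_two R
  · exact fun s => ((Finset.measurable_sum s fun l _ =>
      ((hm l).const_mul _)).pow_const 2).aemeasurable
  · intro s t
    exact ⟨s ∪ t, fun τ => pow_le_pow_left' (Finset.sum_le_sum_of_subset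
        Finset.subset_union_left) 2,
      fun τ => pow_le_pow_left' (Finset.sum_le_sum_of_subset Finset.subset_union_right) 2⟩

lemma summable_int_aux {s : ℝ} (hs : 1 < s) :
    Summable (fun n : ℤ => (1 + |(n:ℝ)|) ^ (-s)) := by
  have hnat : Summable (fun n : ℕ => (1 + (n:ℝ)) ^ (-s)) := by
    have h1 : Summable (fun n : ℕ => ((n:ℝ)) ^ (-s)) :=
      Real.summable_nat_rpow.mpr (by linarith)
    have h2 := (summable_nat_add_iff 1).mpr h1
    refine h2.congr fun n => ?_
    push_cast
    rw [add_comm]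
  refine Summable.of_nat_of_neg (hnat.congr fun n => by norm_num)
    (hnat.congr fun n => ?_)
  push_cast
  rw [abs_neg, abs_of_nonneg (by positivity)]

lemma jap_lower (k : Z3) (i : Fin 3) : 1 + |(k i : ℝ)| ≤ Real.sqrt 2 * jap k := by
  have hx : (k i:ℝ)^2 ≤ ∑ j, (k j:ℝ)^2 :=
    Finset.single_le_sum (f := fun j => (k j:ℝ)^2) (fun j _ => sq_nonneg _) (Finset.mem_univ i)
  have h2 : (1 + |(k i:ℝ)|)^2 ≤ 2 * (jap k)^2 := by
    rw [jap_sq]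
    nlinarith [sq_abs ((k i:ℝ)), abs_nonneg ((k i:ℝ)), sq_nonneg (|(k i:ℝ)| - 1)]
  calc 1 + |(k i:ℝ)| = Real.sqrt ((1 + |(k i:ℝ)|)^2) := (Real.sqrt_sq (by positivity)).symm
    _ ≤ Real.sqrt (2 * (jap k)^2) := Real.sqrt_le_sqrt h2
    _ = Real.sqrt 2 * jap k := by
      rw [Real.sqrt_mul (by norm_num), Real.sqrt_sq (jap_pos k).le]

lemma prod_le_jap (k : Z3) : ∏ i, (1 + |(k i : ℝ)|) ≤ (Real.sqrt 2 * jap k)^3 := by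
  calc ∏ i, (1 + |(k i : ℝ)|) ≤ ∏ _i : Fin 3, (Real.sqrt 2 * jap k) :=
      Finset.prod_le_prod (fun i _ => by positivity) (fun i _ => jap_lower k i)
    _ = (Real.sqrt 2 * jap k)^3 := by
      rw [Finset.prod_const]; norm_num

lemma jap_rpow_neg_le (k : Z3) {r : ℝ} (hr : 0 ≤ r) :
    jap k ^ (-r) ≤ 2 ^ (r/2) * ∏ i, (1 + |(k i : ℝ)|) ^ (-(r/3)) := by
  have h0 : ∀ i : Fin 3, (0:ℝ) < 1 + |(k i:ℝ)| := fun i => by positivity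
  have hP : (0:ℝ) < ∏ i, (1 + |(k i : ℝ)|) := Finset.prod_pos fun i _ => h0 i
  have hQ : (0:ℝ) ≤ Real.sqrt 2 * jap k := mul_nonneg (Real.sqrt_nonneg 2) (jap_pos k).le
  have h1 : ((Real.sqrt 2 * jap k)^3) ^ (-(r/3)) ≤ (∏ i, (1 + |(k i : ℝ)|)) ^ (-(r/3)) :=
    Real.rpow_le_rpow_of_nonpos hP (prod_le_jap k) (by linarith)
  have h2 : ((Real.sqrt 2 * jap k)^3) ^ (-(r/3)) = 2 ^ (-(r/2)) * jap k ^ (-r) := by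
    rw [← Real.rpow_natCast (Real.sqrt 2 * jap k) 3, ← Real.rpow_mul hQ,
      Real.mul_rpow (Real.sqrt_nonneg 2) (jap_pos k).le,
      show Real.sqrt 2 = 2 ^ (1/2:ℝ) from Real.sqrt_eq_rpow 2,
      ← Real.rpow_mul (by norm_num : (0:ℝ) ≤ 2)]
    rw [show ((3:ℕ):ℝ) * -(r/3) = -r by push_cast; ring,
      show (1/2:ℝ) * (-r) = -(r/2) by ring]
  have h3 : (∏ i, (1 + |(k i : ℝ)|)) ^ (-(r/3)) = ∏ i, (1 + |(k i : ℝ)|) ^ (-(r/3)) :=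
    (Real.finset_prod_rpow Finset.univ (fun i => 1 + |(k i : ℝ)|)
      (fun i _ => (h0 i).le) (-(r/3))).symm
  have h4 : jap k ^ (-r) = 2 ^ (r/2) * (2 ^ (-(r/2)) * jap k ^ (-r)) := by
    rw [← mul_assoc, ← Real.rpow_add (by norm_num : (0:ℝ) < 2)]
    norm_num
  rw [h4]
  refine mul_le_mul_of_nonneg_left ?_ (by positivity)
  rw [← h2, ← h3]
  exact h1

def e3 : (ℤ × ℤ × ℤ) ≃ Z3 where
  toFun p := ![p.1, p.2.1, p.2.2]
  invFun k := (k 0, k 1, k 2)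
  left_inv p := rfl
  right_inv k := by
    funext i
    fin_cases i <;> rfl

lemma tsum_japE_neg_lt_top {r : ℝ} (hr : 3 < r) : ∑' k : Z3, japE k ^ (-r) < ⊤ := by
  have hr0 : (0:ℝ) ≤ r := by linarith
  set s := r/3 with hsdef
  have hs : 1 < s := by rw [hsdef]; linarith
  set b : ℤ → ℝ≥0∞ := fun n => ENNReal.ofReal ((1 + |(n:ℝ)|) ^ (-s)) with hb
  have hbfin : ∑' n : ℤ, b n < ⊤ := by
    rw [hb, ← ENNReal.ofReal_tsum_of_nonneg
      (fun n => Real.rpow_nonneg (by positivity) _) (summable_int_aux hs)]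
    exact ENNReal.ofReal_lt_top
  have hkey : ∀ k : Z3, japE k ^ (-r)
      ≤ ENNReal.ofReal (2 ^ (r/2)) * (b (k 0) * (b (k 1) * b (k 2))) := by
    intro k
    rw [japE_rpow]
    calc ENNReal.ofReal (jap k ^ (-r))
        ≤ ENNReal.ofReal (2 ^ (r/2) * ∏ i, (1 + |(k i : ℝ)|) ^ (-s)) :=
          ENNReal.ofReal_le_ofReal (jap_rpow_neg_le k hr0)
      _ = ENNReal.ofReal (2 ^ (r/2)) * (b (k 0) * (b (k 1) * b (k 2))) := by
          rw [Fin.prod_univ_three]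
          rw [ENNReal.ofReal_mul (by positivity), ENNReal.ofReal_mul (by positivity),
            ENNReal.ofReal_mul (by positivity)]
          rw [hb, mul_assoc]
  calc ∑' k : Z3, japE k ^ (-r)
      ≤ ∑' k : Z3, ENNReal.ofReal (2 ^ (r/2)) * (b (k 0) * (b (k 1) * b (k 2))) :=
        ENNReal.tsum_le_tsum hkey
    _ = ENNReal.ofReal (2 ^ (r/2)) * ∑' k : Z3, (b (k 0) * (b (k 1) * b (k 2))) :=
        ENNReal.tsum_mul_left
    _ = ENNReal.ofReal (2 ^ (r/2)) * ((∑' n : ℤ, b n) * ((∑' n : ℤ, b n) * (∑' n : ℤ, b n))) := by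
        congr 1
        rw [← e3.tsum_eq (fun k : Z3 => b (k 0) * (b (k 1) * b (k 2)))]
        calc ∑' p : ℤ × ℤ × ℤ, b (e3 p 0) * (b (e3 p 1) * b (e3 p 2))
            = ∑' (a : ℤ), ∑' (q : ℤ × ℤ), b a * (b q.1 * b q.2) := by
              rw [ENNReal.tsum_prod']; rfl
          _ = ∑' (a : ℤ), b a * ∑' (q : ℤ × ℤ), (b q.1 * b q.2) :=
              tsum_congr fun a => ENNReal.tsum_mul_left
          _ = (∑' n : ℤ, b n) * ∑' (q : ℤ × ℤ), (b q.1 * b q.2) := ENNReal.tsum_mul_right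
          _ = (∑' n : ℤ, b n) * ((∑' n : ℤ, b n) * (∑' n : ℤ, b n)) := by
              congr 1
              calc ∑' (q : ℤ × ℤ), (b q.1 * b q.2)
                  = ∑' (a : ℤ), ∑' (c : ℤ), b a * b c := by rw [ENNReal.tsum_prod']
                _ = ∑' (a : ℤ), b a * ∑' (c : ℤ), b c :=
                    tsum_congr fun a => ENNReal.tsum_mul_left
                _ = _ := ENNReal.tsum_mul_right
    _ < ⊤ := by
        refine ENNReal.mul_lt_top ENNReal.ofReal_lt_top ?_
        exact ENNReal.mul_lt_top hbfin (ENNReal.mul_lt_top hbfin hbfin)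

lemma sq_rpow (x : ℝ≥0∞) (e : ℝ) : (x ^ e) ^ (2:ℕ) = x ^ (e*2) := by
  rw [← erpow_two, ← ENNReal.rpow_mul]

end Aux6

open Aux6

/-- Let `p > 1`, `ζ > 3(1-1/p)` and `T > 0`.  For every `η > 0` there is `C_η > 0` such that
for all nonnegative `H, F, G` on `[0,T] × ℤ³`, measurable in time for each `k`,
`∑_k ⟨k⟩^{ζp} (∫_0^T H(τ,k) (∑_l F(τ,k-l) G(τ,l)) dτ)^{p/2}
  ≤ η ∑_k ⟨k⟩^{ζp} (∫_0^T H(τ,k)² dτ)^{p/2} + C_η A_F^p B_G^p`. -/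
theorem stmt6 (p ζ T : ℝ) (hp : 1 < p) (hζ : 3 * (1 - 1 / p) < ζ) (hT : 0 < T)
    (η : ℝ) (hη : 0 < η) :
    ∃ Cη : ℝ, 0 < Cη ∧ ∀ H F G : ℝ → (Fin 3 → ℤ) → ℝ,
      (∀ k, ∀ τ ∈ Set.Icc (0 : ℝ) T, 0 ≤ H τ k) →
      (∀ k, ∀ τ ∈ Set.Icc (0 : ℝ) T, 0 ≤ F τ k) →
      (∀ k, ∀ τ ∈ Set.Icc (0 : ℝ) T, 0 ≤ G τ k) →
      (∀ k, Measurable fun τ => H τ k) →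
      (∀ k, Measurable fun τ => F τ k) →
      (∀ k, Measurable fun τ => G τ k) →
      (∑' k, japE k ^ (ζ * p) *
          (∫⁻ τ in Set.Icc (0 : ℝ) T,
            ENNReal.ofReal (H τ k) *
              ∑' l, ENNReal.ofReal (F τ (k - l)) * ENNReal.ofReal (G τ l)) ^ (p / 2)) ≤
        ENNReal.ofReal η *
            (∑' k, japE k ^ (ζ * p) *
              (∫⁻ τ in Set.Icc (0 : ℝ) T, ENNReal.ofReal (H τ k) ^ 2) ^ (p / 2)) +
          ENNReal.ofReal Cη * Anorm ζ p T F ^ p * Bnorm ζ p T G ^ p := by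
  classical
  have hp0 : (0:ℝ) < p := lt_trans one_pos hp
  set q : ℝ := p / (p - 1) with hqdef
  have hpq : p.HolderConjugate q := (Real.holderConjugate_iff_eq_conjExponent hp).mpr hqdef
  have hq0 : (0:ℝ) < q := hpq.symm.pos
  have h1q : 1 - 1/p = 1/q := by
    rw [one_div, one_div]; exact hpq.one_sub_inv
  have hζ0 : (0:ℝ) < ζ := by
    have h2 : (0:ℝ) < 1 - 1/p := by rw [h1q]; positivity
    nlinarith
  have hζq : 3 < ζ * q := by
    have h2 : 3 * (1 - 1/p) = 3 / q := by rw [h1q]; ring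
    have h3 : 3 / q < ζ := by rw [← h2]; exact hζ
    calc (3:ℝ) = (3/q) * q := by field_simp
      _ < ζ * q := mul_lt_mul_of_pos_right h3 hq0
  set S : ℝ≥0∞ := ∑' k : Z3, japE k ^ (-(ζ*q)) with hSdef
  have hS : S ≠ ⊤ := (tsum_japE_neg_lt_top hζq).ne
  set D : ℝ≥0∞ := ENNReal.ofReal (2 ^ ζ) with hDdef
  set K : ℝ≥0∞ := (ENNReal.ofReal η)⁻¹ * (D ^ p * ((2:ℝ≥0∞) ^ p * (2 * S ^ (p/q)))) with hKdef
  have hη0 : ENNReal.ofReal η ≠ 0 := by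
    simp only [ne_eq, ENNReal.ofReal_eq_zero, not_le]; exact hη
  have hKtop : K ≠ ⊤ := by
    rw [hKdef]
    refine ENNReal.mul_ne_top (ENNReal.inv_ne_top.mpr hη0) ?_
    refine ENNReal.mul_ne_top (ENNReal.rpow_ne_top_of_nonneg hp0.le ENNReal.ofReal_ne_top) ?_
    refine ENNReal.mul_ne_top (ENNReal.rpow_ne_top_of_nonneg hp0.le (by norm_num)) ?_
    refine ENNReal.mul_ne_top (by norm_num) ?_
    exact ENNReal.rpow_ne_top_of_nonneg (by positivity) hS
  refine ⟨K.toReal + 1, by positivity, ?_⟩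
  intro H F G hHpos hFpos hGpos hmH hmF hmG
  set f : Z3 → ℝ≥0∞ := fun k => ⨆ τ ∈ Set.Icc (0:ℝ) T, ENNReal.ofReal (F τ k) with hfdef
  set g : Z3 → ℝ≥0∞ :=
    fun l => (∫⁻ τ in Set.Icc (0:ℝ) T, ENNReal.ofReal (G τ l) ^ 2) ^ (1/2:ℝ) with hgdef
  set c : Z3 → ℝ≥0∞ := fun k => ∑' l, f (k - l) * g l with hcdef
  set φ : Z3 → ℝ → ℝ≥0∞ :=
    fun k τ => ∑' l, ENNReal.ofReal (F τ (k - l)) * ENNReal.ofReal (G τ l) with hφdef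
  set Af : ℝ≥0∞ := ∑' k, japE k ^ (ζ*p) * f k ^ p with hAfdef
  set Bg : ℝ≥0∞ := ∑' k, japE k ^ (ζ*p) *
    (∫⁻ τ in Set.Icc (0:ℝ) T, ENNReal.ofReal (G τ k) ^ 2) ^ (p/2) with hBgdef
  have hAf : Anorm ζ p T F ^ p = Af := by
    rw [Anorm, ← ENNReal.rpow_mul, one_div, inv_mul_cancel₀ hp0.ne', ENNReal.rpow_one]
  have hBg : Bnorm ζ p T G ^ p = Bg := by
    rw [Bnorm, ← ENNReal.rpow_mul, one_div, inv_mul_cancel₀ hp0.ne', ENNReal.rpow_one]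
  have hglp : ∀ l, g l ^ p
      = (∫⁻ τ in Set.Icc (0:ℝ) T, ENNReal.ofReal (G τ l) ^ 2) ^ (p/2) := by
    intro l
    rw [hgdef, ← ENNReal.rpow_mul, show (1/2:ℝ)*p = p/2 by ring]
  -- per k estimate
  have hstep1 : ∀ k : Z3, japE k ^ (ζ*p) *
      (∫⁻ τ in Set.Icc (0:ℝ) T, ENNReal.ofReal (H τ k) * φ k τ) ^ (p/2)
      ≤ ENNReal.ofReal η * (japE k ^ (ζ*p) *
          (∫⁻ τ in Set.Icc (0:ℝ) T, ENNReal.ofReal (H τ k) ^ 2) ^ (p/2))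
        + (ENNReal.ofReal η)⁻¹ * (japE k ^ (ζ*p) * c k ^ p) := by
    intro k
    have hφm : Measurable (φ k) :=
      Measurable.ennreal_tsum fun l => ((hmF (k - l)).ennreal_ofReal.mul
        (hmG l).ennreal_ofReal)
    have h22 : (2:ℝ).HolderConjugate 2 := Real.HolderConjugate.two_two
    have stepA : (∫⁻ τ in Set.Icc (0:ℝ) T, ENNReal.ofReal (H τ k) * φ k τ)
        ≤ (∫⁻ τ in Set.Icc (0:ℝ) T, ENNReal.ofReal (H τ k) ^ 2) ^ (1/2:ℝ)
          * (∫⁻ τ in Set.Icc (0:ℝ) T, (φ k τ) ^ 2) ^ (1/2:ℝ) := by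
      have h := ENNReal.lintegral_mul_le_Lp_mul_Lq
        ((volume : Measure ℝ).restrict (Set.Icc (0:ℝ) T)) h22
        ((hmH k).ennreal_ofReal.aemeasurable) hφm.aemeasurable
      simpa [erpow_two] using h
    have stepB : (∫⁻ τ in Set.Icc (0:ℝ) T, (φ k τ) ^ 2) ^ (1/2:ℝ) ≤ c k := by
      have hle : (∫⁻ τ in Set.Icc (0:ℝ) T, (φ k τ) ^ 2)
          ≤ ∫⁻ τ in Set.Icc (0:ℝ) T, (∑' l, f (k - l) * ENNReal.ofReal (G τ l)) ^ 2 := by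
        refine lintegral_mono_ae ?_
        filter_upwards [ae_restrict_mem measurableSet_Icc] with τ hτ
        refine pow_le_pow_left' (ENNReal.tsum_le_tsum fun l => ?_) 2
        refine mul_le_mul_left ?_ _
        exact le_iSup₂ (f := fun τ (_ : τ ∈ Set.Icc (0:ℝ) T) =>
          ENNReal.ofReal (F τ (k - l))) τ hτ
      have hmk := mink ((volume : Measure ℝ).restrict (Set.Icc (0:ℝ) T))
        (fun l => f (k - l)) (fun l τ => ENNReal.ofReal (G τ l))
        (fun l => (hmG l).ennreal_ofReal)
      calc (∫⁻ τ in Set.Icc (0:ℝ) T, (φ k τ) ^ 2) ^ (1/2:ℝ)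
          ≤ ((c k) ^ (2:ℕ)) ^ (1/2:ℝ) :=
            ENNReal.rpow_le_rpow (hle.trans hmk) (by norm_num)
        _ = c k := by
            rw [← erpow_two, ← ENNReal.rpow_mul, show (2:ℝ)*(1/2) = 1 by norm_num,
              ENNReal.rpow_one]
    have hI : (∫⁻ τ in Set.Icc (0:ℝ) T, ENNReal.ofReal (H τ k) * φ k τ)
        ≤ (∫⁻ τ in Set.Icc (0:ℝ) T, ENNReal.ofReal (H τ k) ^ 2) ^ (1/2:ℝ) * c k :=
      stepA.trans (mul_le_mul_right stepB _)
    have hIp : (∫⁻ τ in Set.Icc (0:ℝ) T, ENNReal.ofReal (H τ k) * φ k τ) ^ (p/2)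
        ≤ (∫⁻ τ in Set.Icc (0:ℝ) T, ENNReal.ofReal (H τ k) ^ 2) ^ (p/4) * (c k) ^ (p/2) := by
      refine le_trans (ENNReal.rpow_le_rpow hI (by positivity)) ?_
      rw [ENNReal.mul_rpow_of_nonneg _ _ (by positivity : (0:ℝ) ≤ p/2),
        ← ENNReal.rpow_mul, show (1/2:ℝ)*(p/2) = p/4 by ring]
    have hw : japE k ^ (ζ*p) = japE k ^ (ζ*p/2) * japE k ^ (ζ*p/2) := by
      rw [← ENNReal.rpow_add_of_nonneg _ _
        (by positivity : (0:ℝ) ≤ ζ*p/2) (by positivity : (0:ℝ) ≤ ζ*p/2)]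
      ring_nf
    calc japE k ^ (ζ*p) *
        (∫⁻ τ in Set.Icc (0:ℝ) T, ENNReal.ofReal (H τ k) * φ k τ) ^ (p/2)
        ≤ japE k ^ (ζ*p) *
          ((∫⁻ τ in Set.Icc (0:ℝ) T, ENNReal.ofReal (H τ k) ^ 2) ^ (p/4) * (c k) ^ (p/2)) :=
          mul_le_mul_right hIp _
      _ = (japE k ^ (ζ*p/2) *
            (∫⁻ τ in Set.Icc (0:ℝ) T, ENNReal.ofReal (H τ k) ^ 2) ^ (p/4))
          * (japE k ^ (ζ*p/2) * (c k) ^ (p/2)) := by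
          rw [hw]; ring
      _ ≤ ENNReal.ofReal η * (japE k ^ (ζ*p/2) *
            (∫⁻ τ in Set.Icc (0:ℝ) T, ENNReal.ofReal (H τ k) ^ 2) ^ (p/4)) ^ 2
          + (ENNReal.ofReal η)⁻¹ * (japE k ^ (ζ*p/2) * (c k) ^ (p/2)) ^ 2 :=
          eta_split hη _ _
      _ = ENNReal.ofReal η * (japE k ^ (ζ*p) *
            (∫⁻ τ in Set.Icc (0:ℝ) T, ENNReal.ofReal (H τ k) ^ 2) ^ (p/2))
          + (ENNReal.ofReal η)⁻¹ * (japE k ^ (ζ*p) * c k ^ p) := by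
          rw [mul_pow, mul_pow, sq_rpow, sq_rpow, sq_rpow,
            show ζ*p/2*2 = ζ*p by ring, show p/4*2 = p/2 by ring, show p/2*2 = p by ring]
  -- weighted Hölder: (∑ u)^p ≤ S^(p/q) * ∑ (japE^ζ * u)^p
  have hweight : ∀ u : Z3 → ℝ≥0∞,
      (∑' m, u m) ^ p ≤ S ^ (p/q) * ∑' m, (japE m ^ ζ * u m) ^ p := by
    intro u
    have h1 : ∑' m, u m ≤ S ^ (1/q) * (∑' m, (japE m ^ ζ * u m) ^ p) ^ (1/p) := by
      have heq : ∀ m : Z3, u m = (japE m ^ ζ)⁻¹ * (japE m ^ ζ * u m) := fun m => by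
        rw [← mul_assoc, ENNReal.inv_mul_cancel (japE_rpow_ne_zero m ζ)
          (japE_rpow_ne_top m ζ), one_mul]
      have hSid : ∑' m : Z3, ((japE m ^ ζ)⁻¹) ^ q = S := by
        rw [hSdef]
        refine tsum_congr fun m => ?_
        rw [← ENNReal.rpow_neg, ← ENNReal.rpow_mul, neg_mul]
      calc ∑' m, u m = ∑' m, (japE m ^ ζ)⁻¹ * (japE m ^ ζ * u m) := tsum_congr heq
        _ ≤ (∑' m : Z3, ((japE m ^ ζ)⁻¹) ^ q) ^ (1/q)
            * (∑' m, (japE m ^ ζ * u m) ^ p) ^ (1/p) := tsum_holder hpq.symm _ _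
        _ = S ^ (1/q) * (∑' m, (japE m ^ ζ * u m) ^ p) ^ (1/p) := by rw [hSid]
    calc (∑' m, u m) ^ p
        ≤ (S ^ (1/q) * (∑' m, (japE m ^ ζ * u m) ^ p) ^ (1/p)) ^ p :=
          ENNReal.rpow_le_rpow h1 hp0.le
      _ = S ^ (p/q) * ∑' m, (japE m ^ ζ * u m) ^ p := by
          rw [ENNReal.mul_rpow_of_nonneg _ _ hp0.le, ← ENNReal.rpow_mul, ← ENNReal.rpow_mul,
            show (1/q)*p = p/q by ring, show (1/p)*p = 1 by field_simp, ENNReal.rpow_one]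
  have eAf : ∑' m, (japE m ^ ζ * f m) ^ p = Af := by
    rw [hAfdef]
    refine tsum_congr fun m => ?_
    rw [ENNReal.mul_rpow_of_nonneg _ _ hp0.le, ← ENNReal.rpow_mul]
  have eBg : ∑' m, (japE m ^ ζ * g m) ^ p = Bg := by
    rw [hBgdef]
    refine tsum_congr fun m => ?_
    rw [ENNReal.mul_rpow_of_nonneg _ _ hp0.le, ← ENNReal.rpow_mul, hglp]
  -- Peetre split of the convolution
  set P : Z3 → ℝ≥0∞ := fun k => ∑' l, (japE (k-l) ^ ζ * f (k-l)) * g l with hPdef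
  set Q : Z3 → ℝ≥0∞ := fun k => ∑' l, f (k-l) * (japE l ^ ζ * g l) with hQdef
  have hc : ∀ k : Z3, japE k ^ ζ * c k ≤ D * (P k + Q k) := by
    intro k
    calc japE k ^ ζ * c k = ∑' l, japE k ^ ζ * (f (k-l) * g l) := by
          rw [hcdef]; exact ENNReal.tsum_mul_left.symm
      _ ≤ ∑' l, (D * (japE (k-l) ^ ζ + japE l ^ ζ)) * (f (k-l) * g l) :=
          ENNReal.tsum_le_tsum fun l =>
            mul_le_mul_left (japE_peetre hζ0.le k l) _
      _ = ∑' l, D * ((japE (k-l) ^ ζ * f (k-l)) * g l + f (k-l) * (japE l ^ ζ * g l)) :=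
          tsum_congr fun l => by ring
      _ = D * (P k + Q k) := by rw [ENNReal.tsum_mul_left, ENNReal.tsum_add]
  have hS3k : ∀ k : Z3, japE k ^ (ζ*p) * c k ^ p
      ≤ D ^ p * ((2:ℝ≥0∞) ^ p * (P k ^ p + Q k ^ p)) := by
    intro k
    calc japE k ^ (ζ*p) * c k ^ p = (japE k ^ ζ * c k) ^ p := by
          rw [ENNReal.mul_rpow_of_nonneg _ _ hp0.le, ← ENNReal.rpow_mul]
      _ ≤ (D * (P k + Q k)) ^ p := ENNReal.rpow_le_rpow (hc k) hp0.le
      _ = D ^ p * (P k + Q k) ^ p := ENNReal.mul_rpow_of_nonneg _ _ hp0.le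
      _ ≤ D ^ p * ((2:ℝ≥0∞) ^ p * (P k ^ p + Q k ^ p)) :=
          mul_le_mul_right (add_rpow_le _ _ hp0.le) _
  have hPsum : ∑' k, P k ^ p ≤ Af * (∑' l, g l) ^ p := by
    calc ∑' k, P k ^ p
        ≤ (∑' m, (japE m ^ ζ * f m) ^ p) * (∑' l, g l) ^ p :=
          young_conv hpq (fun m => japE m ^ ζ * f m) g
      _ = Af * (∑' l, g l) ^ p := by rw [eAf]
  have hQsum : ∑' k, Q k ^ p ≤ Bg * (∑' m, f m) ^ p := by
    have hswap : ∀ k : Z3, Q k = ∑' m, (japE (k-m) ^ ζ * g (k-m)) * f m := by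
      intro k
      have h := (Equiv.subLeft k).tsum_eq (fun m => (japE (k-m) ^ ζ * g (k-m)) * f m)
      simp only [Equiv.subLeft_apply, sub_sub_cancel] at h
      rw [hQdef, ← h]
      exact tsum_congr fun l => mul_comm _ _
    calc ∑' k, Q k ^ p = ∑' k, (∑' m, (japE (k-m) ^ ζ * g (k-m)) * f m) ^ p :=
          tsum_congr fun k => by rw [hswap k]
      _ ≤ (∑' m, (japE m ^ ζ * g m) ^ p) * (∑' m, f m) ^ p :=
          young_conv hpq (fun m => japE m ^ ζ * g m) f
      _ = Bg * (∑' m, f m) ^ p := by rw [eBg]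
  have hfw : (∑' m, f m) ^ p ≤ S ^ (p/q) * Af := by
    calc (∑' m, f m) ^ p ≤ S ^ (p/q) * ∑' m, (japE m ^ ζ * f m) ^ p := hweight f
      _ = S ^ (p/q) * Af := by rw [eAf]
  have hgw : (∑' l, g l) ^ p ≤ S ^ (p/q) * Bg := by
    calc (∑' l, g l) ^ p ≤ S ^ (p/q) * ∑' m, (japE m ^ ζ * g m) ^ p := hweight g
      _ = S ^ (p/q) * Bg := by rw [eBg]
  have hS3 : ∑' k, japE k ^ (ζ*p) * c k ^ p
      ≤ D ^ p * ((2:ℝ≥0∞) ^ p * (2 * S ^ (p/q))) * (Af * Bg) := by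
    calc ∑' k, japE k ^ (ζ*p) * c k ^ p
        ≤ ∑' k, D ^ p * ((2:ℝ≥0∞) ^ p * (P k ^ p + Q k ^ p)) :=
          ENNReal.tsum_le_tsum hS3k
      _ = D ^ p * ((2:ℝ≥0∞) ^ p * ((∑' k, P k ^ p) + ∑' k, Q k ^ p)) := by
          rw [ENNReal.tsum_mul_left, ENNReal.tsum_mul_left, ENNReal.tsum_add]
      _ ≤ D ^ p * ((2:ℝ≥0∞) ^ p * (Af * (S ^ (p/q) * Bg) + Bg * (S ^ (p/q) * Af))) := by
          refine mul_le_mul_right (mul_le_mul_right (add_le_add ?_ ?_) _) _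
          · exact hPsum.trans (mul_le_mul_right hgw _)
          · exact hQsum.trans (mul_le_mul_right hfw _)
      _ = D ^ p * ((2:ℝ≥0∞) ^ p * (2 * S ^ (p/q))) * (Af * Bg) := by ring
  -- put everything together
  have hKle : K ≤ ENNReal.ofReal (K.toReal + 1) := by
    calc K = ENNReal.ofReal K.toReal := (ENNReal.ofReal_toReal hKtop).symm
      _ ≤ ENNReal.ofReal (K.toReal + 1) :=
        ENNReal.ofReal_le_ofReal (by linarith [ENNReal.toReal_nonneg (a := K)])
  refine le_trans (ENNReal.tsum_le_tsum hstep1) ?_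
  calc (∑' k, (ENNReal.ofReal η * (japE k ^ (ζ*p) *
            (∫⁻ τ in Set.Icc (0:ℝ) T, ENNReal.ofReal (H τ k) ^ 2) ^ (p/2))
          + (ENNReal.ofReal η)⁻¹ * (japE k ^ (ζ*p) * c k ^ p)))
      = ENNReal.ofReal η * (∑' k, japE k ^ (ζ*p) *
            (∫⁻ τ in Set.Icc (0:ℝ) T, ENNReal.ofReal (H τ k) ^ 2) ^ (p/2))
        + (ENNReal.ofReal η)⁻¹ * ∑' k, japE k ^ (ζ*p) * c k ^ p := by
        rw [ENNReal.tsum_add, ENNReal.tsum_mul_left, ENNReal.tsum_mul_left]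
    _ ≤ ENNReal.ofReal η * (∑' k, japE k ^ (ζ*p) *
            (∫⁻ τ in Set.Icc (0:ℝ) T, ENNReal.ofReal (H τ k) ^ 2) ^ (p/2))
        + (ENNReal.ofReal η)⁻¹ *
            (D ^ p * ((2:ℝ≥0∞) ^ p * (2 * S ^ (p/q))) * (Af * Bg)) :=
        add_le_add_right (mul_le_mul_right hS3 _) _
    _ ≤ ENNReal.ofReal η * (∑' k, japE k ^ (ζ*p) *
            (∫⁻ τ in Set.Icc (0:ℝ) T, ENNReal.ofReal (H τ k) ^ 2) ^ (p/2))
        + ENNReal.ofReal (K.toReal + 1) * Anorm ζ p T F ^ p * Bnorm ζ p T G ^ p := by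
        refine add_le_add_right ?_ _
        rw [hAf, hBg]
        calc (ENNReal.ofReal η)⁻¹ *
              (D ^ p * ((2:ℝ≥0∞) ^ p * (2 * S ^ (p/q))) * (Af * Bg))
            = K * (Af * Bg) := by rw [hKdef]; ring
          _ ≤ ENNReal.ofReal (K.toReal + 1) * (Af * Bg) := mul_le_mul_left hKle _
          _ = ENNReal.ofReal (K.toReal + 1) * Af * Bg := by rw [mul_assoc]
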